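/- Let n be an integer with 0 ≤ n ≤ N_{K,L} and let N_coh be a positive real satisfying Δ^{(K)}_n ≤ N_coh/K < Δ^{(K)}_{n+1} (with the conventions Δ^{(K)}_0 = 0 and Δ^{(K)}_{N_{K,L}+1} = +∞). Then the vector p'_opt(2n+K, K) (the closed-form maximizer of C_sum over Ω(2n+K, K) from Theorem 3) maximizes the net rate over all valid pilot assignment vectors: C_net(p, N_coh) ≤ C_net(p'_opt(2n+K, K), N_coh) for every p ∈ P_{L,K}; in particular the optimal pilot length equals 2n+K (Theorem 4). -/

import Mathlib

/-- A pilot assignment vector `p = (p_0, …, p_{m-1})` for `K` users per cell is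
valid if `0 ≤ p_i ≤ K·3^i` for every `i` and `Σ_i p_i · 3^{-i} = K`. -/
def validPK {m : ℕ} (K : ℕ) (p : Fin m → ℤ) : Prop :=
  (∀ i, 0 ≤ p i ∧ p i ≤ (K : ℤ) * 3 ^ (i : ℕ)) ∧
  (∑ i, (p i : ℝ) / 3 ^ (i : ℕ)) = (K : ℝ)

/-- The pilot length `N_pil(p) = Σ_i p_i`. -/
def Npil {m : ℕ} (p : Fin m → ℤ) : ℤ := ∑ i, p i

/-- The per-cell sum rate `C_sum(p) = Σ_i 3^{-i}·p_i·C_i` with `C_i = C_0 + i·d`. -/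
noncomputable def Csum {m : ℕ} (C0 d : ℝ) (p : Fin m → ℤ) : ℝ :=
  ∑ i, (p i : ℝ) / 3 ^ (i : ℕ) * (C0 + (i : ℕ) * d)

/-- `χ(N, K) = min{k ∈ ℕ : Σ_{i=0}^{k} K·3^i > (N - K)/2}`. -/
noncomputable def chiK (N K : ℤ) : ℕ :=
  sInf {k : ℕ | (N - K) / 2 < ∑ i ∈ Finset.range (k + 1), K * (3 : ℤ) ^ i}

/-- The closed-form optimal pilot assignment vector of Theorem 3:
`p'_i = Σ_{s=0}^{i} K·3^s - (N-K)/2` if `i = χ(N,K)`,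
`p'_i = 3·((N-K)/2 - Σ_{s=0}^{i-2} K·3^s)` if `i = χ(N,K) + 1 ≤ m-1`,
and `p'_i = 0` otherwise. -/
noncomputable def poptK (m : ℕ) (K N : ℤ) : Fin m → ℤ := fun i =>
  if (i : ℕ) = chiK N K then (∑ s ∈ Finset.range (chiK N K + 1), K * 3 ^ s) - (N - K) / 2
  else if (i : ℕ) = chiK N K + 1 then
    3 * ((N - K) / 2 - ∑ s ∈ Finset.range (chiK N K), K * 3 ^ s)
  else 0

/-- The net rate `C_net(p, N_coh) = (1 - N_pil(p)/N_coh)·C_sum(p)`. -/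
noncomputable def Cnet {m : ℕ} (C0 d : ℝ) (p : Fin m → ℤ) (Ncoh : ℝ) : ℝ :=
  (1 - (Npil p : ℝ) / Ncoh) * Csum C0 d p

/-- The intersection point
`Δ^{(K)}_n = [2·(2n - 1 - Σ_{i=0}^{η-1} K·3^i + K·ξ(n,K)) + K]/K`, where
`η = η(n,K) = χ(2n+K-2, K)` and `ξ(n,K) = 3^η·C_η/d` with `C_i = C_0 + i·d`. -/
noncomputable def DeltaK (C0 d : ℝ) (K : ℕ) (n : ℕ) : ℝ :=
  (2 * ((2 * (n : ℝ) - 1)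
      - (∑ i ∈ Finset.range (chiK (2 * (n : ℤ) + (K : ℤ) - 2) K), (K : ℝ) * 3 ^ i)
      + (K : ℝ) * (3 ^ chiK (2 * (n : ℤ) + (K : ℤ) - 2) K *
          (C0 + (chiK (2 * (n : ℤ) + (K : ℤ) - 2) K : ℝ) * d) / d))
    + (K : ℝ)) / (K : ℝ)


namespace Thm4Aux
open Finset

def Sg (K : ℤ) (k : ℕ) : ℤ := ∑ i ∈ Finset.range k, K * 3 ^ i

lemma two_Sg (K : ℤ) (k : ℕ) : 2 * Sg K k = K * 3 ^ k - K := by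
  induction k with
  | zero => simp [Sg]
  | succ k ih =>
      rw [Sg, Finset.sum_range_succ, ← Sg, mul_add, ih, pow_succ]; ring

lemma Sg_nonneg {K : ℤ} (hK : 1 ≤ K) (k : ℕ) : 0 ≤ Sg K k :=
  Finset.sum_nonneg fun i _ => by positivity

lemma Sg_succ (K : ℤ) (k : ℕ) : Sg K (k + 1) = Sg K k + K * 3 ^ k :=
  Finset.sum_range_succ _ k

lemma Sg_lt_succ {K : ℤ} (hK : 1 ≤ K) (k : ℕ) : Sg K k < Sg K (k + 1) := by
  rw [Sg_succ]
  nlinarith [pow_pos (show (0:ℤ) < 3 by norm_num) k]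

lemma Sg_mono {K : ℤ} (hK : 1 ≤ K) : StrictMono (Sg K) :=
  strictMono_nat_of_lt_succ (Sg_lt_succ hK)

/-- `cJ K j = χ(2j+K, K)`. -/
noncomputable def cJ (K j : ℤ) : ℕ := sInf {k : ℕ | j < Sg K (k + 1)}

lemma chiK_2jK (K j : ℤ) : chiK (2 * j + K) K = cJ K j := by
  unfold chiK cJ Sg
  congr 1
  ext k
  have : (2 * j + K - K) / 2 = j := by
    rw [add_sub_cancel_right]
    exact Int.mul_ediv_cancel_left j (by norm_num)
  rw [this]

lemma cJ_set_nonempty {K j : ℤ} (hK : 1 ≤ K) (hj : 0 ≤ j) :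
    {k : ℕ | j < Sg K (k + 1)}.Nonempty := by
  refine ⟨j.toNat, ?_⟩
  have h1 : (j.toNat : ℤ) = j := Int.toNat_of_nonneg hj
  have h2 : (j.toNat : ℤ) < 3 ^ j.toNat := by
    exact_mod_cast (Nat.lt_pow_self (by norm_num : 1 < 3) : j.toNat < 3 ^ j.toNat)
  have h3 : (3:ℤ) ^ j.toNat ≤ K * 3 ^ j.toNat := by nlinarith [pow_pos (show (0:ℤ) < 3 by norm_num) j.toNat]
  have h4 : K * 3 ^ j.toNat ≤ Sg K (j.toNat + 1) := by
    rw [Sg_succ]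
    have := Sg_nonneg hK j.toNat
    linarith
  simp only [Set.mem_setOf_eq]
  omega

lemma cJ_mem {K j : ℤ} (hK : 1 ≤ K) (hj : 0 ≤ j) : j < Sg K (cJ K j + 1) :=
  Nat.sInf_mem (cJ_set_nonempty hK hj)

lemma cJ_min {K j : ℤ} (k : ℕ) (hk : k < cJ K j) : Sg K (k + 1) ≤ j :=
  le_of_not_gt (Nat.notMem_of_lt_sInf hk)

lemma Sg_cJ_le {K j : ℤ} (hK : 1 ≤ K) (hj : 0 ≤ j) : Sg K (cJ K j) ≤ j := by
  rcases Nat.eq_zero_or_pos (cJ K j) with h | h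
  · rw [h]; simpa [Sg] using hj
  · obtain ⟨k, hk⟩ := Nat.exists_eq_add_of_lt h
    have := cJ_min (K := K) (j := j) k (by omega)
    rw [hk] at *
    simpa using this

lemma cJ_mono {K j j' : ℤ} (hK : 1 ≤ K) (hj : 0 ≤ j) (hjj : j ≤ j') :
    cJ K j ≤ cJ K j' :=
  Nat.sInf_le (by simpa using lt_of_le_of_lt hjj (cJ_mem hK (hj.trans hjj)))

lemma cJ_succ_le {K j : ℤ} (hK : 1 ≤ K) (hj : 0 ≤ j) :
    cJ K (j + 1) ≤ cJ K j + 1 := by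
  apply Nat.sInf_le
  have h1 := cJ_mem hK hj
  have h2 := Sg_lt_succ hK (cJ K j + 1)
  simp only [Set.mem_setOf_eq]
  omega

lemma cJ_jump {K j : ℤ} (hK : 1 ≤ K) (hj : 0 ≤ j)
    (h : cJ K (j + 1) ≠ cJ K j) :
    cJ K (j + 1) = cJ K j + 1 ∧ j + 1 = Sg K (cJ K j + 1) := by
  have h1 := cJ_mono hK hj (show j ≤ j + 1 by omega)
  have h2 := cJ_succ_le hK hj
  have heq : cJ K (j + 1) = cJ K j + 1 := by omega
  have h3 := cJ_mem hK hj
  have h4 := cJ_min (K := K) (j := j + 1) (cJ K j) (by omega)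
  exact ⟨heq, by omega⟩

lemma cJ_le_of_le {K j : ℤ} (hK : 1 ≤ K) {t : ℕ} (h : j ≤ Sg K t) : cJ K j ≤ t :=
  Nat.sInf_le (by simpa using lt_of_le_of_lt h (Sg_lt_succ hK t))


lemma two_mul_add_one_le_pow (j : ℕ) : 2 * j + 1 ≤ 3 ^ j := by
  induction j with
  | zero => norm_num
  | succ j ih =>
      have : 1 ≤ 3 ^ j := Nat.one_le_pow _ _ (by norm_num)
      calc 2 * (j + 1) + 1 = (2 * j + 1) + 2 := by ring
        _ ≤ 3 ^ j + 2 := by omega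
        _ ≤ 3 ^ (j + 1) := by rw [pow_succ]; omega


/-- chord bound: `i / 3^i ≤ 1/(2·3^k) + (k - 1/2)/3^i`. -/
lemma chord (k i : ℕ) :
    (i : ℝ) / 3 ^ i ≤ 1 / (2 * 3 ^ k) + ((k : ℝ) - 1 / 2) / 3 ^ i := by
  have h3i : (0:ℝ) < 3 ^ i := by positivity
  have h3k : (0:ℝ) < 3 ^ k := by positivity
  have core : 2 * (3:ℝ) ^ k * i ≤ 3 ^ i + 3 ^ k * (2 * k - 1) := by
    rcases le_or_gt k i with h | h
    · obtain ⟨j, rfl⟩ := Nat.exists_eq_add_of_le h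
      have hj : (2 * (j:ℝ) + 1) ≤ 3 ^ j := by exact_mod_cast two_mul_add_one_le_pow j
      rw [pow_add]
      push_cast
      nlinarith [h3k]
    · have hik : (i : ℝ) + 1 ≤ k := by exact_mod_cast h
      nlinarith [h3k, h3i]
  have key : 1 / (2 * 3 ^ k) + ((k : ℝ) - 1 / 2) / 3 ^ i - (i : ℝ) / 3 ^ i
      = (3 ^ i + 3 ^ k * (2 * k - 1) - 2 * 3 ^ k * i) / (2 * 3 ^ k * 3 ^ i) := by
    field_simp
  nlinarith [div_nonneg (by linarith : (0:ℝ) ≤ 3 ^ i + 3 ^ k * (2 * (k:ℝ) - 1) - 2 * 3 ^ k * i)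
      (by positivity : (0:ℝ) ≤ 2 * (3:ℝ) ^ k * 3 ^ i), key]

noncomputable def Gk (C0 d Kr : ℝ) (k : ℕ) (N : ℝ) : ℝ :=
  Kr * C0 + d * (N / (2 * 3 ^ k) + ((k : ℝ) - 1 / 2) * Kr)

noncomputable def Fk (C0 d Ncoh Kr : ℝ) (k : ℕ) (N : ℝ) : ℝ :=
  (1 - N / Ncoh) * Gk C0 d Kr k N

section CsumBounds

variable {m : ℕ} {K : ℕ} {p : Fin m → ℤ} {C0 d : ℝ}

lemma csum_split (hp : validPK K p) :
    Csum C0 d p = C0 * K + d * ∑ i : Fin m, (p i : ℝ) * (i : ℕ) / 3 ^ (i : ℕ) := by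
  have : ∀ i : Fin m, (p i : ℝ) / 3 ^ (i : ℕ) * (C0 + (i : ℕ) * d)
      = C0 * ((p i : ℝ) / 3 ^ (i : ℕ)) + d * ((p i : ℝ) * (i : ℕ) / 3 ^ (i : ℕ)) := by
    intro i; ring
  rw [Csum]
  simp_rw [this]
  rw [Finset.sum_add_distrib, ← Finset.mul_sum, ← Finset.mul_sum, hp.2]

lemma csum_le_Gk (hd : 0 < d) (hp : validPK K p) (k : ℕ) :
    Csum C0 d p ≤ Gk C0 d K k (Npil p) := by
  have hT : ∑ i : Fin m, (p i : ℝ) * (i : ℕ) / 3 ^ (i : ℕ)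
      ≤ (Npil p : ℝ) / (2 * 3 ^ k) + ((k : ℝ) - 1 / 2) * K := by
    have step : ∀ i : Fin m, (p i : ℝ) * (i : ℕ) / 3 ^ (i : ℕ)
        ≤ (p i : ℝ) * (1 / (2 * 3 ^ k)) + ((k : ℝ) - 1 / 2) * ((p i : ℝ) / 3 ^ (i : ℕ)) := by
      intro i
      have hpi : (0:ℝ) ≤ (p i : ℝ) := by exact_mod_cast (hp.1 i).1
      have := mul_le_mul_of_nonneg_left (chord k (i : ℕ)) hpi
      calc (p i : ℝ) * (i : ℕ) / 3 ^ (i : ℕ) = (p i : ℝ) * ((i : ℕ) / 3 ^ (i : ℕ)) := by ring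
        _ ≤ (p i : ℝ) * (1 / (2 * 3 ^ k) + ((k : ℝ) - 1 / 2) / 3 ^ (i : ℕ)) := this
        _ = (p i : ℝ) * (1 / (2 * 3 ^ k)) + ((k : ℝ) - 1 / 2) * ((p i : ℝ) / 3 ^ (i : ℕ)) := by ring
    calc ∑ i : Fin m, (p i : ℝ) * (i : ℕ) / 3 ^ (i : ℕ)
        ≤ ∑ i : Fin m, ((p i : ℝ) * (1 / (2 * 3 ^ k)) + ((k : ℝ) - 1 / 2) * ((p i : ℝ) / 3 ^ (i : ℕ))) :=
          Finset.sum_le_sum fun i _ => step i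
      _ = (∑ i : Fin m, (p i : ℝ)) * (1 / (2 * 3 ^ k)) + ((k : ℝ) - 1 / 2) * ∑ i : Fin m, (p i : ℝ) / 3 ^ (i : ℕ) := by
          rw [Finset.sum_add_distrib, ← Finset.sum_mul, ← Finset.mul_sum]
      _ = (Npil p : ℝ) / (2 * 3 ^ k) + ((k : ℝ) - 1 / 2) * K := by
          rw [hp.2, Npil]
          push_cast
          ring
  rw [csum_split hp, Gk]
  nlinarith [mul_le_mul_of_nonneg_left hT hd.le]

lemma csum_nonneg (hC0 : 0 < C0) (hd : 0 < d) (hp : validPK K p) :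
    (K : ℝ) * C0 ≤ Csum C0 d p := by
  rw [csum_split hp]
  have : (0:ℝ) ≤ ∑ i : Fin m, (p i : ℝ) * (i : ℕ) / 3 ^ (i : ℕ) := by
    apply Finset.sum_nonneg
    intro i _
    have hpi : (0:ℝ) ≤ (p i : ℝ) := by exact_mod_cast (hp.1 i).1
    positivity
  nlinarith

end CsumBounds
section NpilStruct

variable {m : ℕ} {K : ℕ} {p : Fin m → ℤ}

lemma valid_weighted_sum (hm : 1 ≤ m) (hp : validPK K p) :
    ∑ i : Fin m, p i * 3 ^ (m - 1 - (i : ℕ)) = (K : ℤ) * 3 ^ (m - 1) := by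
  have hreal : ∑ i : Fin m, ((p i * 3 ^ (m - 1 - (i : ℕ)) : ℤ) : ℝ)
      = (((K : ℤ) * 3 ^ (m - 1) : ℤ) : ℝ) := by
    push_cast
    have : ∀ i : Fin m, (p i : ℝ) * 3 ^ (m - 1 - (i : ℕ))
        = (p i : ℝ) / 3 ^ (i : ℕ) * 3 ^ (m - 1) := by
      intro i
      have hi : (i : ℕ) ≤ m - 1 := by omega
      have h3 : (3:ℝ) ^ (m - 1 - (i : ℕ)) * 3 ^ (i : ℕ) = 3 ^ (m - 1) := by
        rw [← pow_add]; congr 1; omega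
      have h3i : (3:ℝ) ^ (i : ℕ) ≠ 0 := by positivity
      field_simp
      rw [mul_assoc, h3]
    simp_rw [this]
    rw [← Finset.sum_mul, hp.2]
  exact_mod_cast hreal

lemma npil_ge (hp : validPK K p) : (K : ℤ) ≤ Npil p := by
  have hr : (K : ℝ) ≤ (Npil p : ℝ) := by
    rw [← hp.2, Npil]
    push_cast
    apply Finset.sum_le_sum
    intro i _
    have hpi : (0:ℝ) ≤ (p i : ℝ) := by exact_mod_cast (hp.1 i).1
    have h1 : (1:ℝ) ≤ 3 ^ (i : ℕ) := one_le_pow₀ (by norm_num)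
    rw [div_le_iff₀ (by positivity)]
    nlinarith
  exact_mod_cast hr

lemma npil_struct (hm : 1 ≤ m) (hK : 1 ≤ K) (hp : validPK K p) :
    ∃ j : ℕ, Npil p = 2 * (j : ℤ) + K ∧ (j : ℤ) ≤ Sg K (m - 1) := by
  have hws := valid_weighted_sum hm hp
  -- upper bound
  have hub : Npil p ≤ (K : ℤ) * 3 ^ (m - 1) := by
    rw [← hws, Npil]
    apply Finset.sum_le_sum
    intro i _
    have h1 : (1:ℤ) ≤ 3 ^ (m - 1 - (i : ℕ)) := one_le_pow₀ (by norm_num)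
    nlinarith [(hp.1 i).1]
  -- parity
  have hpar : (2 : ℤ) ∣ Npil p - (K : ℤ) := by
    have h1 : (2:ℤ) ∣ (K : ℤ) * 3 ^ (m - 1) - K := by
      have := two_Sg (K : ℤ) (m - 1)
      exact ⟨Sg K (m - 1), by omega⟩
    have h2 : (2:ℤ) ∣ (K : ℤ) * 3 ^ (m - 1) - Npil p := by
      rw [← hws, Npil, ← Finset.sum_sub_distrib]
      apply Finset.dvd_sum
      intro i _
      have : (2:ℤ) ∣ 3 ^ (m - 1 - (i : ℕ)) - 1 := by
        have := two_Sg 1 (m - 1 - (i : ℕ))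
        exact ⟨Sg 1 (m - 1 - (i : ℕ)), by omega⟩
      obtain ⟨t, ht⟩ := this
      exact ⟨p i * t, by linear_combination p i * ht⟩
    omega
  obtain ⟨t, ht⟩ := hpar
  have hge := npil_ge hp
  have ht0 : 0 ≤ t := by omega
  refine ⟨t.toNat, ?_, ?_⟩
  · rw [Int.toNat_of_nonneg ht0]; omega
  · rw [Int.toNat_of_nonneg ht0]
    have := two_Sg (K : ℤ) (m - 1)
    omega

end NpilStruct

/-- Sum of a two-slot function over `Fin m`. -/
lemma sum_fin_two_slots {M : Type*} [AddCommMonoid M] {m a b : ℕ} (hab : a ≠ b)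
    (A B : ℕ → M) :
    ∑ i : Fin m, (if (i : ℕ) = a then A (i : ℕ) else if (i : ℕ) = b then B (i : ℕ) else 0)
    = (if a < m then A a else 0) + (if b < m then B b else 0) := by
  rw [Fin.sum_univ_eq_sum_range (fun i => if i = a then A i else if i = b then B i else 0)]
  have hsplit : ∀ i, (if i = a then A i else if i = b then B i else 0)
      = (if i = a then A i else 0) + (if i = b then B i else 0) := by
    intro i
    by_cases h1 : i = a
    · subst h1; simp [hab]
    · by_cases h2 : i = b
      · subst h2; simp [Ne.symm hab]
      · simp [h1, h2]
  simp_rw [hsplit]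
  rw [Finset.sum_add_distrib, Finset.sum_ite_eq' (Finset.range m) a A,
    Finset.sum_ite_eq' (Finset.range m) b B]
  simp [Finset.mem_range]
section Popt

variable {m K : ℕ} {C0 d : ℝ}

lemma popt_apply (n : ℕ) (i : Fin m) :
    poptK m K (2 * (n : ℤ) + K) i =
      (if (i : ℕ) = cJ (K : ℤ) (n : ℤ) then Sg (K : ℤ) (cJ (K : ℤ) (n : ℤ) + 1) - n
       else if (i : ℕ) = cJ (K : ℤ) (n : ℤ) + 1 then 3 * ((n : ℤ) - Sg (K : ℤ) (cJ (K : ℤ) (n : ℤ)))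
       else 0) := by
  have hdiv : (2 * (n : ℤ) + K - K) / 2 = (n : ℤ) := by
    rw [add_sub_cancel_right]
    exact Int.mul_ediv_cancel_left _ (by norm_num)
  unfold poptK
  rw [chiK_2jK, hdiv]
  rfl

lemma popt_npil (hm : 2 ≤ m) (hK : 1 ≤ K) {n : ℕ} (hn' : (n : ℤ) ≤ Sg K (m - 1)) :
    Npil (poptK m K (2 * (n : ℤ) + K)) = 2 * (n : ℤ) + K := by
  have hKZ : (1 : ℤ) ≤ (K : ℤ) := by exact_mod_cast hK
  set c := cJ (K : ℤ) (n : ℤ) with hc_def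
  have hcle : c ≤ m - 1 := cJ_le_of_le hKZ hn'
  have hcm : c < m := by omega
  rw [Npil]
  simp_rw [popt_apply n]
  rw [sum_fin_two_slots (show c ≠ c + 1 by omega)
    (fun _ => Sg (K : ℤ) (c + 1) - n) (fun _ => 3 * ((n : ℤ) - Sg (K : ℤ) c))]
  rw [if_pos hcm]
  have h2s := two_Sg (K : ℤ) c
  have hss := Sg_succ (K : ℤ) c
  by_cases hc1 : c + 1 < m
  · rw [if_pos hc1]; linarith
  · rw [if_neg hc1]
    have hc_eq : c = m - 1 := by omega
    have hle : Sg (K : ℤ) c ≤ (n : ℤ) := Sg_cJ_le hKZ (by positivity)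
    have hn_eq : (n : ℤ) = Sg (K : ℤ) c := le_antisymm (hc_eq ▸ hn') hle
    linarith

lemma popt_csum (hm : 2 ≤ m) (hK : 1 ≤ K) {n : ℕ} (hn' : (n : ℤ) ≤ Sg K (m - 1)) :
    Csum C0 d (poptK m K (2 * (n : ℤ) + K))
      = Gk C0 d K (cJ (K : ℤ) (n : ℤ)) (2 * (n : ℝ) + K) := by
  have hKZ : (1 : ℤ) ≤ (K : ℤ) := by exact_mod_cast hK
  set c := cJ (K : ℤ) (n : ℤ) with hc_def
  have hcle : c ≤ m - 1 := cJ_le_of_le hKZ hn'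
  have hcm : c < m := by omega
  have h2s : ((Sg (K : ℤ) c : ℤ) : ℝ) = ((K : ℝ) * 3 ^ c - K) / 2 := by
    have h := two_Sg (K : ℤ) c
    have h' : ((2 * Sg (K : ℤ) c : ℤ) : ℝ) = (((K : ℤ) * 3 ^ c - K : ℤ) : ℝ) := by rw [h]
    push_cast at h'
    linarith
  have hterm : ∀ i : Fin m,
      ((poptK m K (2 * (n : ℤ) + K) i : ℝ) / 3 ^ (i : ℕ) * (C0 + (i : ℕ) * d))
      = (if (i : ℕ) = c then ((Sg (K : ℤ) (c + 1) - n : ℤ) : ℝ) / 3 ^ (i : ℕ) * (C0 + (i : ℕ) * d)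
         else if (i : ℕ) = c + 1 then ((3 * ((n : ℤ) - Sg (K : ℤ) c) : ℤ) : ℝ) / 3 ^ (i : ℕ) * (C0 + (i : ℕ) * d)
         else 0) := by
    intro i
    rw [popt_apply n i, ← hc_def]
    by_cases h1 : (i : ℕ) = c
    · simp [h1]
    · by_cases h2 : (i : ℕ) = c + 1 <;> simp [h1, h2]
  rw [Csum]
  simp_rw [hterm]
  rw [sum_fin_two_slots (show c ≠ c + 1 by omega)
    (fun i => ((Sg (K : ℤ) (c + 1) - n : ℤ) : ℝ) / 3 ^ i * (C0 + i * d))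
    (fun i => ((3 * ((n : ℤ) - Sg (K : ℤ) c) : ℤ) : ℝ) / 3 ^ i * (C0 + i * d))]
  rw [if_pos hcm]
  by_cases hc1 : c + 1 < m
  · rw [if_pos hc1]
    rw [Gk]
    push_cast [Sg_succ]
    rw [h2s]
    have h3c : (3 : ℝ) ^ c ≠ 0 := by positivity
    field_simp
    ring
  · rw [if_neg hc1]
    have hc_eq : c = m - 1 := by omega
    have hle : Sg (K : ℤ) c ≤ (n : ℤ) := Sg_cJ_le hKZ (by positivity)
    have hn_eq : (n : ℤ) = Sg (K : ℤ) c := le_antisymm (hc_eq ▸ hn') hle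
    have h1 : ((Sg (K : ℤ) (c + 1) - (n : ℤ) : ℤ) : ℝ) = (K : ℝ) * 3 ^ c := by
      rw [Sg_succ, hn_eq]
      push_cast
      ring
    have hnr : (n : ℝ) = ((K : ℝ) * 3 ^ c - K) / 2 := by
      rw [← h2s]
      exact_mod_cast congrArg Int.cast hn_eq
    rw [h1, Gk, hnr]
    have h3c : (3 : ℝ) ^ c ≠ 0 := by positivity
    field_simp
    ring

end Popt
section StepDelta

variable {K : ℕ} {C0 d Ncoh : ℝ}

lemma chi_delta (K j : ℕ) :
    chiK (2 * ((j + 1 : ℕ) : ℤ) + (K : ℤ) - 2) (K : ℤ) = cJ (K : ℤ) (j : ℤ) := by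
  have h : (2 * ((j + 1 : ℕ) : ℤ) + (K : ℤ) - 2) = 2 * (j : ℤ) + K := by push_cast; ring
  rw [h, chiK_2jK]

lemma K_delta (hK : 1 ≤ K) (j : ℕ) :
    (K : ℝ) * DeltaK C0 d K (j + 1)
      = 2 * ((2 * ((j : ℝ) + 1) - 1) - ((K : ℝ) * 3 ^ (cJ (K : ℤ) (j : ℤ)) - K) / 2
          + (K : ℝ) * (3 ^ (cJ (K : ℤ) (j : ℤ)) * (C0 + (cJ (K : ℤ) (j : ℤ) : ℝ) * d) / d))
        + K := by
  have hK0 : (K : ℝ) ≠ 0 := by positivity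
  have hsum : (∑ i ∈ Finset.range (cJ (K : ℤ) (j : ℤ)), (K : ℝ) * 3 ^ i)
      = ((K : ℝ) * 3 ^ (cJ (K : ℤ) (j : ℤ)) - K) / 2 := by
    have h := two_Sg (K : ℤ) (cJ (K : ℤ) (j : ℤ))
    have h' : ((2 * Sg (K : ℤ) (cJ (K : ℤ) (j : ℤ)) : ℤ) : ℝ)
        = (((K : ℤ) * 3 ^ (cJ (K : ℤ) (j : ℤ)) - K : ℤ) : ℝ) := by rw [h]
    push_cast at h'
    have h2 : ((Sg (K : ℤ) (cJ (K : ℤ) (j : ℤ)) : ℤ) : ℝ)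
        = (∑ i ∈ Finset.range (cJ (K : ℤ) (j : ℤ)), (K : ℝ) * 3 ^ i) := by
      rw [Sg]; push_cast; rfl
    rw [h2] at h'
    linarith
  unfold DeltaK
  rw [chi_delta, hsum]
  push_cast
  field_simp
  try ring

lemma step_eq (hd : d ≠ 0) (hN : Ncoh ≠ 0) (hK : 1 ≤ K) (j : ℕ) :
    Fk C0 d Ncoh K (cJ (K : ℤ) (j : ℤ)) (2 * (j : ℝ) + K + 2)
      - Fk C0 d Ncoh K (cJ (K : ℤ) (j : ℤ)) (2 * (j : ℝ) + K)
    = d / (3 ^ (cJ (K : ℤ) (j : ℤ)) * Ncoh) * (Ncoh - K * DeltaK C0 d K (j + 1)) := by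
  rw [K_delta hK j]
  unfold Fk Gk
  have h3 : (3 : ℝ) ^ (cJ (K : ℤ) (j : ℤ)) ≠ 0 := by positivity
  field_simp
  ring

lemma Gk_jump (C0 d : ℝ) (K k : ℕ) :
    Gk C0 d K (k + 1) ((K : ℝ) * 3 ^ (k + 1)) = Gk C0 d K k ((K : ℝ) * 3 ^ (k + 1)) := by
  unfold Gk
  have h3 : (3 : ℝ) ^ k ≠ 0 := by positivity
  push_cast
  field_simp
  ring

/-- `ψ(j) = F_{χ_j}(2j+K)`. -/
noncomputable def psi (C0 d Ncoh : ℝ) (K : ℕ) (j : ℕ) : ℝ :=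
  Fk C0 d Ncoh K (cJ (K : ℤ) (j : ℤ)) (2 * (j : ℝ) + K)

lemma psi_step (hd : d ≠ 0) (hN : Ncoh ≠ 0) (hK : 1 ≤ K) (j : ℕ) :
    psi C0 d Ncoh K (j + 1) - psi C0 d Ncoh K j
    = d / (3 ^ (cJ (K : ℤ) (j : ℤ)) * Ncoh) * (Ncoh - K * DeltaK C0 d K (j + 1)) := by
  have hKZ : (1 : ℤ) ≤ (K : ℤ) := by exact_mod_cast hK
  have hcast : ((j + 1 : ℕ) : ℤ) = (j : ℤ) + 1 := by push_cast; ring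
  have hNeq : (2 * ((j + 1 : ℕ) : ℝ) + K) = 2 * (j : ℝ) + K + 2 := by push_cast; ring
  by_cases h : cJ (K : ℤ) ((j : ℤ) + 1) = cJ (K : ℤ) (j : ℤ)
  · unfold psi
    rw [hcast, h, hNeq]
    exact step_eq hd hN hK j
  · obtain ⟨heq, hS⟩ := cJ_jump hKZ (by positivity : (0:ℤ) ≤ (j:ℤ)) h
    have hval : 2 * ((j : ℝ) + 1) + K = (K : ℝ) * 3 ^ (cJ (K : ℤ) (j : ℤ) + 1) := by
      have h2 := two_Sg (K : ℤ) (cJ (K : ℤ) (j : ℤ) + 1)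
      have h3 : (2 * ((j : ℤ) + 1) : ℤ) = (K : ℤ) * 3 ^ (cJ (K : ℤ) (j : ℤ) + 1) - K := by
        rw [← hS] at h2
        linarith
      have h4 : ((2 * ((j : ℤ) + 1) : ℤ) : ℝ)
          = (((K : ℤ) * 3 ^ (cJ (K : ℤ) (j : ℤ) + 1) - K : ℤ) : ℝ) := by rw [h3]
      push_cast at h4
      linarith
    have hpsi1 : psi C0 d Ncoh K (j + 1)
        = Fk C0 d Ncoh K (cJ (K : ℤ) (j : ℤ)) (2 * (j : ℝ) + K + 2) := by
      unfold psi Fk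
      rw [hcast, heq]
      have harg : (2 * ((j + 1 : ℕ) : ℝ) + K) = (K : ℝ) * 3 ^ (cJ (K : ℤ) (j : ℤ) + 1) := by
        rw [hNeq]; push_cast at hval ⊢; linarith
      rw [harg, Gk_jump]
      have harg2 : ((K : ℝ) * 3 ^ (cJ (K : ℤ) (j : ℤ) + 1)) = 2 * (j : ℝ) + K + 2 := by
        push_cast at hval ⊢; linarith
      rw [harg2]
    rw [hpsi1]
    exact step_eq hd hN hK j

lemma delta_lb (hC0 : 0 < C0) (hd : 0 < d) (hK : 1 ≤ K) (j : ℕ) :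
    2 * ((j : ℝ) + 1) + K ≤ (K : ℝ) * DeltaK C0 d K (j + 1) := by
  have hKZ : (1 : ℤ) ≤ (K : ℤ) := by exact_mod_cast hK
  rw [K_delta hK j]
  set c := cJ (K : ℤ) (j : ℤ) with hc
  have hle : Sg (K : ℤ) c ≤ (j : ℤ) := Sg_cJ_le hKZ (by positivity)
  have h2s : ((K : ℝ) * 3 ^ c - K) / 2 ≤ (j : ℝ) := by
    have h := two_Sg (K : ℤ) c
    have : ((K : ℤ) * 3 ^ c - K : ℤ) ≤ 2 * (j : ℤ) := by omega
    have h4 : (((K : ℤ) * 3 ^ c - K : ℤ) : ℝ) ≤ ((2 * (j : ℤ) : ℤ) : ℝ) := by exact_mod_cast this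
    push_cast at h4
    linarith
  have hxi : 0 < (K : ℝ) * (3 ^ c * (C0 + (c : ℝ) * d) / d) := by positivity
  linarith

lemma delta_mono_succ (hC0 : 0 < C0) (hd : 0 < d) (hK : 1 ≤ K) (j : ℕ) :
    DeltaK C0 d K (j + 1) ≤ DeltaK C0 d K (j + 1 + 1) := by
  have hKpos : (0 : ℝ) < K := by positivity
  have hKZ : (1 : ℤ) ≤ (K : ℤ) := by exact_mod_cast hK
  rw [← mul_le_mul_iff_right₀ hKpos]
  rw [K_delta hK j, K_delta hK (j + 1)]
  have hcast : ((j + 1 : ℕ) : ℤ) = (j : ℤ) + 1 := by push_cast; ring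
  rw [hcast]
  by_cases h : cJ (K : ℤ) ((j : ℤ) + 1) = cJ (K : ℤ) (j : ℤ)
  · rw [h]; push_cast; linarith
  · obtain ⟨heq, -⟩ := cJ_jump hKZ (by positivity : (0:ℤ) ≤ (j:ℤ)) h
    rw [heq]
    set c := cJ (K : ℤ) (j : ℤ) with hc
    have key1 : (K : ℝ) * (3 ^ (c + 1) * (C0 + ((c : ℝ) + 1) * d) / d)
        = (K : ℝ) * (3 ^ c * (C0 + (c : ℝ) * d) / d)
          + (K : ℝ) * 3 ^ c * (2 * C0 + (2 * (c : ℝ) + 2) * d) / d + (K : ℝ) * 3 ^ c := by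
      field_simp
      ring
    have key2 : (0 : ℝ) ≤ (K : ℝ) * 3 ^ c * (2 * C0 + (2 * (c : ℝ) + 2) * d) / d := by positivity
    have h3 : ((K : ℝ) * 3 ^ (c + 1) - K) / 2 = ((K : ℝ) * 3 ^ c - K) / 2 + (K : ℝ) * 3 ^ c := by
      rw [pow_succ]; ring
    push_cast
    push_cast at key1 h3
    rw [key1, h3]
    linarith

end StepDelta
lemma chain_up (f : ℕ → ℝ) {a b : ℕ} (hab : a ≤ b)
    (h : ∀ j, a ≤ j → j < b → f j ≤ f (j + 1)) : f a ≤ f b := by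
  induction b, hab using Nat.le_induction with
  | base => exact le_refl _
  | succ b hab ih =>
      exact le_trans (ih fun j hj hjb => h j hj (by omega)) (h b hab (by omega))

lemma chain_down (f : ℕ → ℝ) {a b : ℕ} (hab : a ≤ b)
    (h : ∀ j, a ≤ j → j < b → f (j + 1) ≤ f j) : f b ≤ f a := by
  induction b, hab using Nat.le_induction with
  | base => exact le_refl _
  | succ b hab ih =>
      exact le_trans (h b hab (by omega)) (ih fun j hj hjb => h j hj (by omega))

lemma delta_chain {K : ℕ} {C0 d : ℝ} (hC0 : 0 < C0) (hd : 0 < d) (hK : 1 ≤ K)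
    {a b : ℕ} (ha : 1 ≤ a) (hab : a ≤ b) : DeltaK C0 d K a ≤ DeltaK C0 d K b := by
  induction b, hab using Nat.le_induction with
  | base => exact le_refl _
  | succ b hab ih =>
      refine le_trans ih ?_
      obtain ⟨b', rfl⟩ : ∃ b', b = b' + 1 := ⟨b - 1, by omega⟩
      exact delta_mono_succ hC0 hd hK b'

lemma Gk_nonneg {K : ℕ} {C0 d : ℝ} (hC0 : 0 < C0) (hd : 0 < d) (hK : 1 ≤ K)
    (k : ℕ) {N : ℝ} (hN : (K : ℝ) ≤ N) : 0 ≤ Gk C0 d K k N := by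
  have hKR : (0:ℝ) < K := by exact_mod_cast hK
  unfold Gk
  rcases Nat.eq_zero_or_pos k with h | h
  · subst h
    norm_num
    nlinarith
  · have hk1 : (1:ℝ) ≤ (k : ℝ) := by exact_mod_cast h
    have h3k : (0:ℝ) < 3 ^ k := by positivity
    have hNpos : (0:ℝ) < N := lt_of_lt_of_le hKR hN
    have h1 : (0:ℝ) ≤ N / (2 * 3 ^ k) := by positivity
    have h2 : (0:ℝ) ≤ d * (N / (2 * 3 ^ k)) := mul_nonneg hd.le h1
    have h3 : (0:ℝ) ≤ d * (((k:ℝ) - 1/2) * K) :=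
      mul_nonneg hd.le (mul_nonneg (by linarith) hKR.le)
    nlinarith [mul_pos hKR hC0]

lemma cJ_zero {K : ℕ} (hK : 1 ≤ K) : cJ (K : ℤ) 0 = 0 := by
  have : (0 : ℤ) < Sg (K : ℤ) (0 + 1) := by
    rw [Sg_succ]
    simp [Sg]
    exact_mod_cast hK
  exact Nat.eq_zero_of_le_zero (Nat.sInf_le this)

end Thm4Aux

/-- Theorem 4: if `Δ^{(K)}_n ≤ N_coh/K < Δ^{(K)}_{n+1}` (with the conventions
`Δ^{(K)}_0 = 0` and `Δ^{(K)}_{N_{K,L}+1} = +∞`, where `N_{K,L} = (K·3^{m-1}-K)/2`),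
then `p'_opt(2n+K, K)` maximizes the net rate over all valid pilot assignment
vectors; in particular the optimal pilot length is `2n+K`. -/
theorem theorem4_optimal_pilot_length_multiuser (m : ℕ) (hm : 2 ≤ m)
    (K : ℕ) (hK : 1 ≤ K) (C0 d : ℝ) (hC0 : 0 < C0) (hd : 0 < d)
    (n : ℕ) (hn : n ≤ (K * 3 ^ (m - 1) - K) / 2)
    (Ncoh : ℝ) (hNcoh : 0 < Ncoh)
    (hlow : 1 ≤ n → DeltaK C0 d K n ≤ Ncoh / K)
    (hhigh : n + 1 ≤ (K * 3 ^ (m - 1) - K) / 2 → Ncoh / K < DeltaK C0 d K (n + 1)) :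
    Npil (poptK m K (2 * (n : ℤ) + K)) = 2 * (n : ℤ) + K ∧
    ∀ p : Fin m → ℤ, validPK K p →
      Cnet C0 d p Ncoh ≤ Cnet C0 d (poptK m K (2 * (n : ℤ) + K)) Ncoh := by
  classical
  open Thm4Aux in
  have hKZ : (1:ℤ) ≤ (K:ℤ) := by exact_mod_cast hK
  have hKR : (0:ℝ) < K := by positivity
  have hKle : K ≤ K * 3 ^ (m - 1) := Nat.le_mul_of_pos_right _ (by positivity)
  have h2Sg := Thm4Aux.two_Sg (K:ℤ) (m - 1)
  have hNdiv : ∀ t : ℕ, (t ≤ (K * 3 ^ (m - 1) - K) / 2) ↔ ((t : ℤ) ≤ Thm4Aux.Sg (K:ℤ) (m - 1)) := by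
    intro t
    rw [Nat.le_div_iff_mul_le two_pos]
    constructor
    · intro h
      have h2 : ((t * 2 : ℕ) : ℤ) ≤ ((K * 3 ^ (m - 1) - K : ℕ) : ℤ) := by exact_mod_cast h
      rw [Nat.cast_sub hKle] at h2
      push_cast at h2
      omega
    · intro h
      have h2 : ((t * 2 : ℕ) : ℤ) ≤ ((K * 3 ^ (m - 1) - K : ℕ) : ℤ) := by
        rw [Nat.cast_sub hKle]
        push_cast
        omega
      exact_mod_cast h2
  have hn2 : (n : ℤ) ≤ Thm4Aux.Sg (K:ℤ) (m - 1) := (hNdiv n).1 hn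
  have hnpil := Thm4Aux.popt_npil hm hK hn2
  refine ⟨hnpil, ?_⟩
  intro p hp
  -- Cnet of popt equals psi n
  have hpopt : Cnet C0 d (poptK m K (2 * (n : ℤ) + K)) Ncoh = Thm4Aux.psi C0 d Ncoh K n := by
    rw [Cnet, hnpil, Thm4Aux.popt_csum hm hK hn2, Thm4Aux.psi, Thm4Aux.Fk]
    push_cast
    ring
  rw [hpopt]
  -- step sign lemmas
  have hstep := fun j => Thm4Aux.psi_step (C0 := C0) (d := d) (Ncoh := Ncoh) hd.ne' hNcoh.ne' hK j
  have hup : ∀ j, j ≤ n → Thm4Aux.psi C0 d Ncoh K j ≤ Thm4Aux.psi C0 d Ncoh K n := by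
    intro j hj
    apply Thm4Aux.chain_up _ hj
    intro t _ htn
    have h1 : DeltaK C0 d K (t + 1) ≤ DeltaK C0 d K n :=
      Thm4Aux.delta_chain hC0 hd hK (by omega) (by omega)
    have h2 : DeltaK C0 d K n ≤ Ncoh / K := hlow (by omega)
    have h3 : (K : ℝ) * DeltaK C0 d K (t + 1) ≤ Ncoh := by
      have := (div_le_div_iff_of_pos_right hKR).2 (le_trans h1 h2)
      calc (K:ℝ) * DeltaK C0 d K (t+1) ≤ (K:ℝ) * (Ncoh / K) := by
            exact mul_le_mul_of_nonneg_left (le_trans h1 h2) hKR.le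
        _ = Ncoh := by field_simp
    have hs := hstep t
    have hfac : (0:ℝ) ≤ d / (3 ^ (Thm4Aux.cJ (K:ℤ) (t:ℤ)) * Ncoh) := by positivity
    nlinarith
  have hdown : ∀ j, n ≤ j → (j : ℤ) ≤ Thm4Aux.Sg (K:ℤ) (m - 1) →
      Thm4Aux.psi C0 d Ncoh K j ≤ Thm4Aux.psi C0 d Ncoh K n := by
    intro j hj hjle
    apply Thm4Aux.chain_down _ hj
    intro t htn htj
    have hhi : n + 1 ≤ (K * 3 ^ (m - 1) - K) / 2 := by
      rw [hNdiv]
      have : ((n:ℤ) + 1) ≤ (j : ℤ) := by exact_mod_cast Nat.succ_le_of_lt (lt_of_le_of_lt htn htj)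
      omega
    have h1 : DeltaK C0 d K (n + 1) ≤ DeltaK C0 d K (t + 1) :=
      Thm4Aux.delta_chain hC0 hd hK (by omega) (by omega)
    have h2 : Ncoh / K < DeltaK C0 d K (n + 1) := hhigh hhi
    have h3 : Ncoh ≤ (K : ℝ) * DeltaK C0 d K (t + 1) := by
      have h4 : Ncoh / K ≤ DeltaK C0 d K (t + 1) := le_trans h2.le h1
      calc Ncoh = (K:ℝ) * (Ncoh / K) := by field_simp
        _ ≤ (K:ℝ) * DeltaK C0 d K (t+1) := mul_le_mul_of_nonneg_left h4 hKR.le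
    have hs := hstep t
    have hfac : (0:ℝ) ≤ d / (3 ^ (Thm4Aux.cJ (K:ℤ) (t:ℤ)) * Ncoh) := by positivity
    nlinarith
  -- structure of p
  obtain ⟨j, hj_eq, hj_le⟩ := Thm4Aux.npil_struct (by omega) hK hp
  by_cases hcase : (Npil p : ℝ) ≤ Ncoh
  · have h1 : Cnet C0 d p Ncoh ≤ Thm4Aux.psi C0 d Ncoh K j := by
      have hfac : (0:ℝ) ≤ 1 - (Npil p : ℝ) / Ncoh := by
        rw [sub_nonneg, div_le_one hNcoh]; exact hcase
      calc Cnet C0 d p Ncoh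
          ≤ (1 - (Npil p : ℝ) / Ncoh) * Thm4Aux.Gk C0 d K (Thm4Aux.cJ (K:ℤ) (j:ℤ)) (Npil p) :=
            mul_le_mul_of_nonneg_left (Thm4Aux.csum_le_Gk hd hp _) hfac
        _ = Thm4Aux.psi C0 d Ncoh K j := by
            rw [Thm4Aux.psi, Thm4Aux.Fk, hj_eq]
            push_cast
            ring
    rcases le_or_gt j n with hjn | hjn
    · exact le_trans h1 (hup j hjn)
    · exact le_trans h1 (hdown j hjn.le hj_le)
  · push_neg at hcase
    have hCsum_lb := Thm4Aux.csum_nonneg hC0 hd hp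
    have hCsum0 : (0:ℝ) ≤ Csum C0 d p := le_trans (by positivity) hCsum_lb
    have hCnet_np : Cnet C0 d p Ncoh ≤ 0 := by
      rw [Cnet]
      apply mul_nonpos_of_nonpos_of_nonneg _ hCsum0
      have hNgt : (1:ℝ) < (Npil p : ℝ) / Ncoh := (one_lt_div hNcoh).2 hcase
      linarith
    by_cases hN0 : (2 * (n : ℝ) + K) ≤ Ncoh
    · have hpsin : 0 ≤ Thm4Aux.psi C0 d Ncoh K n := by
        rw [Thm4Aux.psi, Thm4Aux.Fk]
        apply mul_nonneg
        · rw [sub_nonneg, div_le_one hNcoh]; exact hN0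
        · exact Thm4Aux.Gk_nonneg hC0 hd hK _ (by nlinarith)
      linarith
    · push_neg at hN0
      have hn0 : n = 0 := by
        by_contra h
        have h1 : 1 ≤ n := by omega
        have h2 := hlow h1
        have h3 := Thm4Aux.delta_lb (C0 := C0) (d := d) hC0 hd hK (n - 1)
        have h4 : ((n - 1 : ℕ) : ℝ) + 1 = (n : ℝ) := by
          have : ((n - 1 : ℕ) : ℝ) = (n : ℝ) - 1 := by
            have : (1:ℕ) ≤ n := h1
            push_cast [Nat.cast_sub this]
            ring
          rw [this]; ring
        rw [show n - 1 + 1 = n by omega, h4] at h3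
        have h5 : (K:ℝ) * DeltaK C0 d K n ≤ Ncoh := by
          calc (K:ℝ) * DeltaK C0 d K n ≤ (K:ℝ) * (Ncoh / K) :=
                mul_le_mul_of_nonneg_left h2 hKR.le
            _ = Ncoh := by field_simp
        linarith
      subst hn0
      have hNcohK : Ncoh < (K : ℝ) := by
        simpa using hN0
      have hpsi0 : Thm4Aux.psi C0 d Ncoh K 0 = (1 - (K:ℝ) / Ncoh) * ((K:ℝ) * C0) := by
        rw [Thm4Aux.psi, Thm4Aux.Fk]
        simp only [Nat.cast_zero]
        rw [Thm4Aux.cJ_zero hK, Thm4Aux.Gk]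
        norm_num
        left; right; ring
      rw [hpsi0]
      have hNpK : (K : ℝ) ≤ (Npil p : ℝ) := by exact_mod_cast Thm4Aux.npil_ge hp
      have hfac1 : (1 - (Npil p : ℝ) / Ncoh) ≤ (1 - (K:ℝ) / Ncoh) := by
        have : (K:ℝ) / Ncoh ≤ (Npil p : ℝ) / Ncoh := by gcongr
        linarith
      have hfac2 : (1 - (K:ℝ) / Ncoh) ≤ 0 := by
        have : (1:ℝ) < (K:ℝ) / Ncoh := (one_lt_div hNcoh).2 hNcohK
        linarith
      calc Cnet C0 d p Ncoh = (1 - (Npil p : ℝ) / Ncoh) * Csum C0 d p := rfl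
        _ ≤ (1 - (K:ℝ) / Ncoh) * Csum C0 d p := mul_le_mul_of_nonneg_right hfac1 hCsum0
        _ ≤ (1 - (K:ℝ) / Ncoh) * ((K:ℝ) * C0) := mul_le_mul_of_nonpos_left hCsum_lb hfac2
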